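/- Let n ≥ 1, let k ∈ [1..n−1], let χ be a real number with 0 < χ < n, and let x₁, x₂, w ∈ {0,1}^n with |x₁|₁ = |x₂|₁ = |w|₁ = n − k, Hamming distance of x₁ and x₂ equal to 2, w ≠ x₁, and w ≠ x₂. Then the probability that uniform crossover of x₁ and x₂, followed independently by standard bit mutation with rate χ/n, produces a string z with |z|₁ = n − k and z ≠ w is at least (1/2)·(1 − χ/n)^n·(1 + χ/2). -/

import Mathlib

open scoped ENNReal

namespace GA

attribute [local instance] Classical.propDecidable

/-- Bit strings of length `n`. -/
abbrev BitString (n : ℕ) := Fin n → Bool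

/-- The number of ones in a bit string. -/
def oneCount {n : ℕ} (x : BitString n) : ℕ := (Finset.univ.filter fun i => x i = true).card

/-- The all-ones string, the unique global optimum of `jump`. -/
def allOnes (n : ℕ) : BitString n := fun _ => true

/-- The Hamming distance of two bit strings. -/
def hamming {n : ℕ} (x y : BitString n) : ℕ := (Finset.univ.filter fun i => x i ≠ y i).card

/-- The jump function with gap size `k`. -/
def jump (n k : ℕ) (x : BitString n) : ℕ :=
  if oneCount x = n ∨ oneCount x ≤ n - k then k + oneCount x else n - oneCount x

/-- Interpret a real number as a probability in `ℝ≥0∞` (clamped to `[0,1]`). -/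
noncomputable def toProb (p : ℝ) : ℝ≥0∞ := min (ENNReal.ofReal p) 1

lemma toProb_le_one (p : ℝ) : toProb p ≤ 1 := min_le_right _ _

/-- The product of independent distributions on the bits, as a distribution on bit strings. -/
noncomputable def pmfPi {n : ℕ} (p : Fin n → PMF Bool) : PMF (BitString n) :=
  PMF.ofFintype (fun z => ∏ i, p i (z i)) (by
    have h1 : ∀ i : Fin n, ∑ b : Bool, p i b = 1 := fun i => by
      rw [← tsum_fintype (L := SummationFilter.unconditional _)]; exact (p i).tsum_coe
    calc ∑ z : BitString n, ∏ i, p i (z i)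
        = ∑ z ∈ Fintype.piFinset (fun _ : Fin n => (Finset.univ : Finset Bool)),
            ∏ i, p i (z i) := by rw [Fintype.piFinset_univ]
      _ = ∏ i, ∑ b : Bool, p i b := (Finset.prod_univ_sum _ _).symm
      _ = 1 := Finset.prod_eq_one fun i _ => h1 i)

/-- The distribution of one bit after flipping `a` with probability `p`. -/
noncomputable def bitFlip (p : ℝ≥0∞) (hp : p ≤ 1) (a : Bool) : PMF Bool :=
  PMF.ofFintype (fun b => if b = a then 1 - p else p) (by
    rw [Fintype.sum_bool]
    cases a
    · rw [if_neg (fun h => Bool.noConfusion h), if_pos rfl]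
      exact add_tsub_cancel_of_le hp
    · rw [if_pos rfl, if_neg (fun h => Bool.noConfusion h)]
      exact tsub_add_cancel_of_le hp)

/-- Standard bit mutation with mutation rate `p`: every bit of `x` is flipped independently
with probability `p`. -/
noncomputable def mutate {n : ℕ} (p : ℝ≥0∞) (hp : p ≤ 1) (x : BitString n) : PMF (BitString n) :=
  pmfPi fun i => bitFlip p hp (x i)

/-- One bit of a uniform crossover. -/
noncomputable def crossBit (a b : Bool) : PMF Bool :=
  if a = b then PMF.pure a else PMF.uniformOfFintype Bool

/-- Uniform crossover of `x` and `y`: every bit is chosen uniformly at random from the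
corresponding bits of the two parents, independently across positions. -/
noncomputable def crossover {n : ℕ} (x y : BitString n) : PMF (BitString n) :=
  pmfPi fun i => crossBit (x i) (y i)

/-- Uniform crossover of `x` and `y` followed (independently) by standard bit mutation
with rate `p`. -/
noncomputable def crossMut {n : ℕ} (p : ℝ≥0∞) (hp : p ≤ 1) (x y : BitString n) :
    PMF (BitString n) :=
  (crossover x y).bind (mutate p hp)

/-- The probability of an event under a discrete distribution. -/
noncomputable def prEvent {α : Type*} (p : PMF α) (E : α → Prop) : ℝ≥0∞ :=
  ∑' a, if E a then p a else 0

/-- Conditional probability `Pr[E | A]`. -/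
noncomputable def condPr {α : Type*} (p : PMF α) (E A : α → Prop) : ℝ≥0∞ :=
  prEvent p (fun a => E a ∧ A a) / prEvent p A

/-- The minimal fitness value in a nonempty population. -/
noncomputable def minFit {n : ℕ} (f : BitString n → ℕ) (Q : Multiset (BitString n))
    (hQ : Q ≠ 0) : ℕ :=
  (Q.map f).toFinset.min' (by
    rw [Multiset.toFinset_nonempty]
    simpa [Multiset.map_eq_zero] using hQ)

lemma filter_minFit_ne {n : ℕ} (f : BitString n → ℕ) (Q : Multiset (BitString n)) (hQ : Q ≠ 0) :
    Q.filter (fun a => f a = minFit f Q hQ) ≠ 0 := by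
  have hmem : minFit f Q hQ ∈ (Q.map f).toFinset := Finset.min'_mem _ _
  rw [Multiset.mem_toFinset, Multiset.mem_map] at hmem
  obtain ⟨a, haQ, hfa⟩ := hmem
  intro h0
  have hin : a ∈ Q.filter (fun a => f a = minFit f Q hQ) :=
    Multiset.mem_filter.mpr ⟨haQ, hfa⟩
  rw [h0] at hin
  exact absurd hin (Multiset.notMem_zero a)

/-- Remove an individual with lowest `f`-value from `Q`, breaking ties uniformly at random. -/
noncomputable def removeWorst {n : ℕ} (f : BitString n → ℕ) (Q : Multiset (BitString n))
    (hQ : Q ≠ 0) : PMF (Multiset (BitString n)) :=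
  (PMF.ofMultiset (Q.filter (fun a => f a = minFit f Q hQ)) (filter_minFit_ne f Q hQ)).map
    (fun ℓ => Q.erase ℓ)

/-- The complete random outcome of one iteration of the `(μ+1)` GA: whether crossover was
used, the selected parent(s), the offspring, and the next population. -/
structure IterOutcome (n : ℕ) where
  cross : Bool
  par1 : BitString n
  par2 : BitString n
  off : BitString n
  newPop : Multiset (BitString n)

/-- One iteration of the `(μ+1)` GA with crossover rate `pc` and mutation rate `pm`,
maximizing `f`, started from population `P`: with probability `pc` two parents are chosen
uniformly at random with replacement and an offspring is created by uniform crossover followed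
by standard bit mutation; otherwise a uniformly random individual is mutated. Afterwards an
individual of lowest fitness among `P` plus the offspring is removed, ties broken uniformly. -/
noncomputable def iterPMF (n : ℕ) (f : BitString n → ℕ) (pc pm : ℝ)
    (P : Multiset (BitString n)) : PMF (IterOutcome n) :=
  if hP : P ≠ 0 then
    ((PMF.bernoulli (toProb pc).toNNReal
      (by simpa using ENNReal.toNNReal_mono ENNReal.one_ne_top (toProb_le_one pc))).bind fun doCross =>
      if doCross then
        (PMF.ofMultiset P hP).bind fun x =>
          (PMF.ofMultiset P hP).bind fun y =>
            (crossMut (toProb pm) (toProb_le_one pm) x y).map fun z =>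
              ((true, x, y, z) : Bool × BitString n × BitString n × BitString n)
      else
        (PMF.ofMultiset P hP).bind fun x =>
          (mutate (toProb pm) (toProb_le_one pm) x).map fun z => (false, x, x, z)).bind fun r =>
      (removeWorst f (r.2.2.2 ::ₘ P) (Multiset.cons_ne_zero)).map fun P' =>
        ⟨r.1, r.2.1, r.2.2.1, r.2.2.2, P'⟩
  else PMF.pure ⟨false, fun _ => false, fun _ => false, fun _ => false, P⟩

/-- A multiset of `m` independent samples from `p`. -/
noncomputable def iidMultiset {α : Type*} (p : PMF α) : ℕ → PMF (Multiset α)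
  | 0 => PMF.pure 0
  | m + 1 => (iidMultiset p m).bind fun s => p.map fun a => a ::ₘ s

/-- The initial population of the `(μ+1)` GA: `μ` independent uniform samples. -/
noncomputable def initPop (n μ : ℕ) : PMF (Multiset (BitString n)) :=
  iidMultiset (PMF.uniformOfFintype (BitString n)) μ

/-- State of the run of the GA on `jump n k`: current population together with a flag
recording whether the global optimum has been evaluated so far. -/
noncomputable def gaStepFlag (n k : ℕ) (pc pm : ℝ) :
    Multiset (BitString n) × Bool → PMF (Multiset (BitString n) × Bool) := fun s =>
  (iterPMF n (jump n k) pc pm s.1).map fun o => (o.newPop, s.2 || decide (o.off = allOnes n))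

/-- One step of the GA on `jump n k`, tracking only the population. -/
noncomputable def gaStepPop (n k : ℕ) (pc pm : ℝ) :
    Multiset (BitString n) → PMF (Multiset (BitString n)) := fun P =>
  (iterPMF n (jump n k) pc pm P).map fun o => o.newPop

/-- The initial state of the GA on `jump n k` (population plus flag whether the optimum
was evaluated during initialization). -/
noncomputable def initState (n μ : ℕ) : PMF (Multiset (BitString n) × Bool) :=
  (initPop n μ).map fun P => (P, decide (allOnes n ∈ P))

/-- `survive step G t s` is the probability that a Markov chain with transition kernel `step`
started in `s` does not visit the set `G` during the first `t` steps (including time 0),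
i.e. `Pr[T > t]` for the hitting time `T` of `G`. -/
noncomputable def survive {S : Type*} (step : S → PMF S) (G : S → Prop) : ℕ → S → ℝ≥0∞
  | 0, s => if G s then 0 else 1
  | t + 1, s => if G s then 0 else ∑' s', step s s' * survive step G t s'

/-- `Pr[T ≤ t]` for the hitting time `T` of `G` of the Markov chain `step` started in `s`. -/
noncomputable def prHitBy {S : Type*} (step : S → PMF S) (G : S → Prop) (t : ℕ) (s : S) :
    ℝ≥0∞ :=
  1 - survive step G t s

/-- The expected hitting time `E[T]`, `T = inf {t | X_t ∈ G}`, of a Markov chain with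
transition kernel `step` and initial distribution `ρ`, computed as `∑_t Pr[T > t]`. -/
noncomputable def expectedHitting {S : Type*} (step : S → PMF S) (G : S → Prop) (ρ : PMF S) :
    ℝ≥0∞ :=
  ∑' t : ℕ, ∑' s, ρ s * survive step G t s

/-- The expected runtime (number of fitness evaluations until the global optimum is evaluated
for the first time) of the `(μ+1)` GA on `jump n k`: the `μ` initial evaluations plus the
expected number of iterations until the optimum is evaluated. -/
noncomputable def expectedRuntime (n k μ : ℕ) (pc pm : ℝ) : ℝ≥0∞ :=
  μ + expectedHitting (gaStepFlag n k pc pm) (fun s => s.2 = true) (initState n μ)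

/-- The expected number of iterations of the `(μ+1)` GA on `jump n k` until the optimum is
evaluated or the entire population is on the plateau. -/
noncomputable def expectedTimePlateau (n k μ : ℕ) (pc pm : ℝ) : ℝ≥0∞ :=
  expectedHitting (gaStepFlag n k pc pm)
    (fun s => s.2 = true ∨ ∀ x ∈ s.1, oneCount x = n - k) (initState n μ)



/-! ### Auxiliary lemmas for Statement 13 -/

lemma prEvent_bind {α β : Type*} (p : PMF α) (f : α → PMF β) (E : β → Prop) :
    prEvent (p.bind f) E = ∑' a, p a * prEvent (f a) E := by
  unfold prEvent
  simp only [PMF.bind_apply]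
  have h1 : ∀ b, (if E b then ∑' a, p a * f a b else 0)
      = ∑' a, if E b then p a * f a b else 0 := by
    intro b; by_cases h : E b <;> simp [h]
  simp only [h1]
  rw [ENNReal.tsum_comm]
  congr 1; funext a
  rw [← ENNReal.tsum_mul_left]
  congr 1; funext b
  by_cases h : E b <;> simp [h]

lemma sum_le_prEvent {α : Type*} (q : PMF α) (E : α → Prop) (S : Finset α)
    (hS : ∀ a ∈ S, E a) : ∑ a ∈ S, q a ≤ prEvent q E := by
  unfold prEvent
  calc ∑ a ∈ S, q a = ∑ a ∈ S, if E a then q a else 0 := by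
        refine Finset.sum_congr rfl fun a ha => ?_
        rw [if_pos (hS a ha)]
    _ ≤ ∑' a, if E a then q a else 0 := ENNReal.sum_le_tsum S

lemma crossover_apply_agree {n : ℕ} (x y z : BitString n)
    (hz : ∀ m, x m = y m → z m = x m) :
    crossover x y z = 2⁻¹ ^ hamming x y := by
  unfold crossover pmfPi
  rw [PMF.ofFintype_apply]
  have key : ∀ m : Fin n, crossBit (x m) (y m) (z m)
      = if x m = y m then 1 else 2⁻¹ := by
    intro m
    by_cases h : x m = y m
    · simp [crossBit, h, hz m h, PMF.pure_apply]
    · simp [crossBit, h, PMF.uniformOfFintype_apply]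
  simp only [key]
  rw [Finset.prod_ite]
  simp [hamming, Finset.prod_const]

lemma mutate_apply {n : ℕ} (p : ℝ≥0∞) (hp : p ≤ 1) (x z : BitString n) :
    mutate p hp x z = (1 - p) ^ (n - hamming x z) * p ^ hamming x z := by
  unfold mutate pmfPi bitFlip
  rw [PMF.ofFintype_apply]
  simp only [PMF.ofFintype_apply]
  rw [Finset.prod_ite]
  simp only [Finset.prod_const]
  have h1 : (Finset.univ.filter fun i => ¬ z i = x i).card = hamming x z := by
    unfold hamming
    congr 1
    apply Finset.filter_congr
    intro m _
    simp [ne_comm, eq_comm]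
  have h2 : (Finset.univ.filter fun i => z i = x i).card = n - hamming x z := by
    have := Finset.card_filter_add_card_filter_not
      (s := (Finset.univ : Finset (Fin n))) (p := fun i => z i = x i)
    simp only [Finset.card_univ, Fintype.card_fin] at this
    omega
  rw [h1, h2]

def flipAt {n : ℕ} (y : BitString n) (m : Fin n) : BitString n :=
  Function.update y m (!(y m))

lemma flipAt_apply {n : ℕ} (y : BitString n) (m i : Fin n) :
    flipAt y m i = if i = m then !(y m) else y i := Function.update_apply y m _ i

lemma hamming_self {n : ℕ} (y : BitString n) : hamming y y = 0 := by
  simp [hamming]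

lemma hamming_flipAt {n : ℕ} (y : BitString n) (m : Fin n) :
    hamming y (flipAt y m) = 1 := by
  unfold hamming
  have key : (Finset.univ.filter fun i => y i ≠ flipAt y m i) = {m} := by
    ext i
    simp only [Finset.mem_filter, Finset.mem_singleton, Finset.mem_univ, true_and]
    rw [flipAt_apply]
    by_cases h : i = m <;> simp [h]
  rw [key]; simp

lemma flipAt_inj {n : ℕ} (y : BitString n) {m m' : Fin n}
    (h : flipAt y m = flipAt y m') : m = m' := by
  by_contra hne
  have h2 := congrFun h m
  rw [flipAt_apply, flipAt_apply, if_pos rfl, if_neg hne] at h2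
  simp at h2

lemma oneCount_flipAt_true {n : ℕ} (y : BitString n) (m : Fin n) (h : y m = true) :
    oneCount (flipAt y m) + 1 = oneCount y := by
  unfold oneCount
  have key : (Finset.univ.filter fun i => flipAt y m i = true)
      = (Finset.univ.filter fun i => y i = true).erase m := by
    ext i
    simp only [Finset.mem_filter, Finset.mem_erase, Finset.mem_univ, true_and]
    rw [flipAt_apply]
    by_cases hi : i = m <;> simp [hi, h]
  have hm : m ∈ Finset.univ.filter fun i => y i = true := by simp [h]
  have hc : 0 < (Finset.univ.filter fun i => y i = true).card :=
    Finset.card_pos.mpr ⟨m, hm⟩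
  rw [key, Finset.card_erase_of_mem hm]
  omega

lemma oneCount_flipAt_false {n : ℕ} (y : BitString n) (m : Fin n) (h : y m = false) :
    oneCount (flipAt y m) = oneCount y + 1 := by
  unfold oneCount
  have key : (Finset.univ.filter fun i => flipAt y m i = true)
      = insert m (Finset.univ.filter fun i => y i = true) := by
    ext i
    simp only [Finset.mem_filter, Finset.mem_insert, Finset.mem_univ, true_and]
    rw [flipAt_apply]
    by_cases hi : i = m <;> simp [hi, h]
  have hm : m ∉ Finset.univ.filter fun i => y i = true := by simp [h]
  rw [key, Finset.card_insert_of_notMem hm]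

lemma oneCount_add_two {n : ℕ} (x₁ x₂ : BitString n) (i j : Fin n) (hij : i ≠ j)
    (h1i : x₁ i = true) (h1j : x₁ j = true) (h2i : x₂ i = false) (h2j : x₂ j = false)
    (hoff : ∀ m, m ≠ i → m ≠ j → x₁ m = x₂ m) : oneCount x₂ + 2 = oneCount x₁ := by
  unfold oneCount
  have key : (Finset.univ.filter fun m => x₁ m = true)
      = insert i (insert j (Finset.univ.filter fun m => x₂ m = true)) := by
    ext m
    simp only [Finset.mem_filter, Finset.mem_insert, Finset.mem_univ, true_and]
    by_cases hmi : m = i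
    · simp [hmi, h1i]
    · by_cases hmj : m = j
      · simp [hmj, h1j]
      · simp [hmi, hmj, ← hoff m hmi hmj]
  have hj : j ∉ Finset.univ.filter fun m => x₂ m = true := by simp [h2j]
  have hi : i ∉ insert j (Finset.univ.filter fun m => x₂ m = true) := by
    simp [hij, h2i]
  rw [key, Finset.card_insert_of_notMem hi, Finset.card_insert_of_notMem hj]


lemma prEvent_mutate_flip_ge {n : ℕ} (p : ℝ≥0∞) (hp : p ≤ 1) (y w : BitString n)
    (c : ℕ) (T : Finset (Fin n))
    (hT : ∀ m ∈ T, oneCount (flipAt y m) = c ∧ flipAt y m ≠ w) :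
    (T.card : ℝ≥0∞) * ((1 - p) ^ (n - 1) * p) ≤
      prEvent (mutate p hp y) (fun z => oneCount z = c ∧ z ≠ w) := by
  refine le_trans ?_ (sum_le_prEvent (mutate p hp y) _ (T.image (flipAt y)) ?_)
  · rw [Finset.sum_image (fun a _ b _ h => flipAt_inj y h)]
    have hval : ∀ m ∈ T, mutate p hp y (flipAt y m) = (1 - p) ^ (n - 1) * p := by
      intro m _
      rw [mutate_apply, hamming_flipAt, pow_one]
    rw [Finset.sum_congr rfl hval, Finset.sum_const, nsmul_eq_mul]
  · intro z hz
    rw [Finset.mem_image] at hz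
    obtain ⟨m, hm, rfl⟩ := hz
    exact hT m hm

lemma main_bound (n k : ℕ) (hn : 1 ≤ n) (hk1 : 1 ≤ k) (hk2 : k + 1 ≤ n)
    (χ : ℝ) (hχ0 : 0 < χ) (hχn : χ < n)
    (x₁ x₂ w : BitString n) (hx₁ : oneCount x₁ = n - k) (hx₂ : oneCount x₂ = n - k)
    (hdist : hamming x₁ x₂ = 2)
    (hw1 : w ≠ x₁) (hw2 : w ≠ x₂)
    (i j : Fin n) (hij : i ≠ j)
    (h1i : x₁ i = true) (h1j : x₁ j = false) (h2i : x₂ i = false) (h2j : x₂ j = true)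
    (hoff : ∀ m, m ≠ i → m ≠ j → x₁ m = x₂ m) :
    ENNReal.ofReal (1 / 2 * (1 - χ / n) ^ n * (1 + χ / 2)) ≤
      prEvent (crossMut (toProb (χ / n)) (toProb_le_one (χ / n)) x₁ x₂)
        (fun z => oneCount z = n - k ∧ z ≠ w) := by
  have hn0 : (0:ℝ) < n := by exact_mod_cast hn
  set c : ℝ := χ / n with hcdef
  have hc0 : 0 < c := div_pos hχ0 hn0
  have hc1 : c < 1 := (div_lt_one hn0).mpr hχn
  have hp : toProb c = ENNReal.ofReal c :=
    min_eq_left (ENNReal.ofReal_le_one.mpr hc1.le)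
  have h1p : (1 : ℝ≥0∞) - toProb c = ENNReal.ofReal (1 - c) := by
    rw [hp, ENNReal.ofReal_sub 1 hc0.le, ENNReal.ofReal_one]
  -- the two intermediate crossover results
  set yup : BitString n := flipAt x₁ j with hyup
  set ydown : BitString n := flipAt x₁ i with hydown
  have hyupi : yup i = true := by rw [hyup, flipAt_apply, if_neg hij]; exact h1i
  have hyupj : yup j = true := by rw [hyup, flipAt_apply, if_pos rfl, h1j]; rfl
  have hydowni : ydown i = false := by rw [hydown, flipAt_apply, if_pos rfl, h1i]; rfl
  have hydownj : ydown j = false := by rw [hydown, flipAt_apply, if_neg hij.symm]; exact h1j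
  have hcup : oneCount yup = n - k + 1 := by
    rw [hyup, oneCount_flipAt_false x₁ j h1j, hx₁]
  have hcdown : oneCount ydown + 1 = n - k := by
    rw [hydown, oneCount_flipAt_true x₁ i h1i, hx₁]
  have hbool : ∀ {a b : BitString n} (m : Fin n), a m = true → b m = false → a ≠ b := by
    intro a b m ha hb hab
    rw [hab, hb] at ha
    exact Bool.noConfusion ha
  have d12 : x₁ ≠ x₂ := hbool i h1i h2i
  have d1u : x₁ ≠ yup := Ne.symm (hbool j hyupj h1j)
  have d1d : x₁ ≠ ydown := hbool i h1i hydowni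
  have d2u : x₂ ≠ yup := Ne.symm (hbool i hyupi h2i)
  have d2d : x₂ ≠ ydown := hbool j h2j hydownj
  have dud : yup ≠ ydown := hbool i hyupi hydowni
  have hagree1 : ∀ m, x₁ m = x₂ m → x₁ m = x₁ m := fun _ _ => rfl
  have hagree2 : ∀ m, x₁ m = x₂ m → x₂ m = x₁ m := fun _ h => h.symm
  have hagreeu : ∀ m, x₁ m = x₂ m → yup m = x₁ m := by
    intro m h
    have hmj : m ≠ j := by
      intro e; rw [e, h1j, h2j] at h; exact Bool.noConfusion h
    rw [hyup, flipAt_apply, if_neg hmj]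
  have hagreed : ∀ m, x₁ m = x₂ m → ydown m = x₁ m := by
    intro m h
    have hmi : m ≠ i := by
      intro e; rw [e, h1i, h2i] at h; exact Bool.noConfusion h
    rw [hydown, flipAt_apply, if_neg hmi]
  have hcross : ∀ z : BitString n, (∀ m, x₁ m = x₂ m → z m = x₁ m) →
      crossover x₁ x₂ z = 4⁻¹ := by
    intro z hz
    rw [crossover_apply_agree x₁ x₂ z hz, hdist, ← ENNReal.inv_pow]
    norm_num
  -- abbreviations
  set P : ℝ≥0∞ := toProb c with hPdef
  set Q : ℝ≥0∞ := 1 - P with hQdef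
  set E : BitString n → Prop := fun z => oneCount z = n - k ∧ z ≠ w with hE
  -- mutation bounds for the four parents
  have hEx₁ : Q ^ n ≤ prEvent (mutate P (toProb_le_one c) x₁) E := by
    refine le_trans ?_ (sum_le_prEvent _ E {x₁} ?_)
    · rw [Finset.sum_singleton, mutate_apply, hamming_self]
      simp
      exact le_rfl
    · intro a ha
      rw [Finset.mem_singleton] at ha
      subst ha
      exact ⟨hx₁, Ne.symm hw1⟩
  have hEx₂ : Q ^ n ≤ prEvent (mutate P (toProb_le_one c) x₂) E := by
    refine le_trans ?_ (sum_le_prEvent _ E {x₂} ?_)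
    · rw [Finset.sum_singleton, mutate_apply, hamming_self]
      simp
      exact le_rfl
    · intro a ha
      rw [Finset.mem_singleton] at ha
      subst ha
      exact ⟨hx₂, Ne.symm hw2⟩
  -- bound for yup
  have hEup : ((n - k : ℕ) : ℝ≥0∞) * (Q ^ (n - 1) * P) ≤
      prEvent (mutate P (toProb_le_one c) yup) E := by
    set Tu := (Finset.univ.filter fun m => yup m = true).filter
      (fun m => ¬ flipAt yup m = w) with hTudef
    have hTall : (Finset.univ.filter fun m => yup m = true).card = n - k + 1 := hcup
    have hwcard : ((Finset.univ.filter fun m => yup m = true).filter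
        (fun m => flipAt yup m = w)).card ≤ 1 := by
      refine Finset.card_le_one.mpr fun a ha b hb => ?_
      rw [Finset.mem_filter] at ha hb
      exact flipAt_inj yup (ha.2.trans hb.2.symm)
    have hsplit := Finset.card_filter_add_card_filter_not
      (s := Finset.univ.filter fun m => yup m = true) (p := fun m => flipAt yup m = w)
    have hTucard : n - k ≤ Tu.card := by
      rw [hTudef]; omega
    refine le_trans ?_ (prEvent_mutate_flip_ge P (toProb_le_one c) yup w (n - k) Tu ?_)
    · exact mul_le_mul_left (by exact_mod_cast Nat.cast_le.mpr hTucard) _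
    · intro m hm
      rw [hTudef, Finset.mem_filter, Finset.mem_filter] at hm
      obtain ⟨⟨-, hmt⟩, hmw⟩ := hm
      have := oneCount_flipAt_true yup m hmt
      exact ⟨by omega, hmw⟩
  -- bound for ydown
  have hEdown : ((k : ℕ) : ℝ≥0∞) * (Q ^ (n - 1) * P) ≤
      prEvent (mutate P (toProb_le_one c) ydown) E := by
    set Td := (Finset.univ.filter fun m => ¬ ydown m = true).filter
      (fun m => ¬ flipAt ydown m = w) with hTddef
    have hsplit0 := Finset.card_filter_add_card_filter_not
      (s := (Finset.univ : Finset (Fin n))) (p := fun m => ydown m = true)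
    have hcu : (Finset.univ : Finset (Fin n)).card = n := by simp
    have hcount : (Finset.univ.filter fun m => ydown m = true).card = oneCount ydown := rfl
    have hTall : (Finset.univ.filter fun m => ¬ ydown m = true).card = k + 1 := by omega
    have hwcard : ((Finset.univ.filter fun m => ¬ ydown m = true).filter
        (fun m => flipAt ydown m = w)).card ≤ 1 := by
      refine Finset.card_le_one.mpr fun a ha b hb => ?_
      rw [Finset.mem_filter] at ha hb
      exact flipAt_inj ydown (ha.2.trans hb.2.symm)
    have hsplit := Finset.card_filter_add_card_filter_not
      (s := Finset.univ.filter fun m => ¬ ydown m = true)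
      (p := fun m => flipAt ydown m = w)
    have hTdcard : k ≤ Td.card := by
      rw [hTddef]; omega
    refine le_trans ?_ (prEvent_mutate_flip_ge P (toProb_le_one c) ydown w (n - k) Td ?_)
    · exact mul_le_mul_left (by exact_mod_cast Nat.cast_le.mpr hTdcard) _
    · intro m hm
      rw [hTddef, Finset.mem_filter, Finset.mem_filter] at hm
      obtain ⟨⟨-, hmt⟩, hmw⟩ := hm
      have hmf : ydown m = false := by
        cases h : ydown m
        · rfl
        · exact absurd h hmt
      have := oneCount_flipAt_false ydown m hmf
      exact ⟨by omega, hmw⟩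
  -- the total probability is at least the sum over the four parents
  set F : Finset (BitString n) := {x₁, x₂, yup, ydown} with hFdef
  have hsum : ∑ y ∈ F, crossover x₁ x₂ y * prEvent (mutate P (toProb_le_one c) y) E
      ≤ prEvent (crossMut P (toProb_le_one c) x₁ x₂) E := by
    unfold crossMut
    rw [prEvent_bind]
    exact ENNReal.sum_le_tsum F
  have hFsum : ∑ y ∈ F, crossover x₁ x₂ y * prEvent (mutate P (toProb_le_one c) y) E
      = crossover x₁ x₂ x₁ * prEvent (mutate P (toProb_le_one c) x₁) E
      + (crossover x₁ x₂ x₂ * prEvent (mutate P (toProb_le_one c) x₂) E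
      + (crossover x₁ x₂ yup * prEvent (mutate P (toProb_le_one c) yup) E
      + crossover x₁ x₂ ydown * prEvent (mutate P (toProb_le_one c) ydown) E)) := by
    rw [hFdef]
    rw [Finset.sum_insert (by simp [d12, d1u, d1d]),
        Finset.sum_insert (by simp [d2u, d2d]),
        Finset.sum_insert (by simp [dud]),
        Finset.sum_singleton]
  have hmain : 4⁻¹ * Q ^ n + (4⁻¹ * Q ^ n
      + (4⁻¹ * (((n - k : ℕ) : ℝ≥0∞) * (Q ^ (n - 1) * P))
      + 4⁻¹ * (((k : ℕ) : ℝ≥0∞) * (Q ^ (n - 1) * P))))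
      ≤ prEvent (crossMut P (toProb_le_one c) x₁ x₂) E := by
    refine le_trans ?_ hsum
    rw [hFsum, hcross x₁ hagree1, hcross x₂ hagree2, hcross yup hagreeu, hcross ydown hagreed]
    gcongr
  refine le_trans ?_ hmain
  -- now pure arithmetic with ofReal
  have hq0 : (0:ℝ) ≤ 1 - c := by linarith
  have q4 : (4⁻¹ : ℝ≥0∞) = ENNReal.ofReal (4⁻¹ : ℝ) := by
    rw [ENNReal.ofReal_inv_of_pos (by norm_num)]
    norm_num
  have hterm : ∀ a : ℕ, 4⁻¹ * ((a : ℝ≥0∞) * (Q ^ (n - 1) * P))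
      = ENNReal.ofReal (4⁻¹ * ((a : ℝ) * ((1 - c) ^ (n - 1) * c))) := by
    intro a
    rw [ENNReal.ofReal_mul (by norm_num), ENNReal.ofReal_mul (Nat.cast_nonneg a),
        ENNReal.ofReal_mul (by positivity), ENNReal.ofReal_pow hq0,
        ENNReal.ofReal_natCast, ← q4, ← hp, ← h1p]
  have hterm2 : (4⁻¹ : ℝ≥0∞) * Q ^ n = ENNReal.ofReal (4⁻¹ * (1 - c) ^ n) := by
    rw [ENNReal.ofReal_mul (by norm_num), ENNReal.ofReal_pow hq0, ← q4, ← h1p]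
  rw [hterm2, hterm (n - k), hterm k, ← ENNReal.ofReal_add (by positivity) (by positivity),
      ← ENNReal.ofReal_add (by positivity) (by positivity),
      ← ENNReal.ofReal_add (by positivity) (by positivity)]
  apply ENNReal.ofReal_le_ofReal
  have hcast : ((n - k : ℕ) : ℝ) = (n : ℝ) - (k : ℝ) := by
    rw [Nat.cast_sub (by omega)]
  have hnc : (n : ℝ) * c = χ := by
    rw [hcdef]
    field_simp
  have hqle : (1 - c) ^ n ≤ (1 - c) ^ (n - 1) :=
    pow_le_pow_of_le_one hq0 (by linarith) (Nat.sub_le n 1)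
  have hmul : χ * (1 - c) ^ n ≤ χ * (1 - c) ^ (n - 1) :=
    mul_le_mul_of_nonneg_left hqle hχ0.le
  have h1 : (0:ℝ) ≤ (1 - c) ^ (n - 1) := by positivity
  have h2 : (0:ℝ) ≤ (1 - c) ^ n := by positivity
  rw [hcast]
  nlinarith [hmul, hnc, h1, h2, hχ0.le]

/-- for `x₁, x₂, w` on the plateau (with `n - k` ones), `x₁, x₂` at Hamming
distance `2` and both different from `w`, uniform crossover of `x₁` and `x₂` followed by
standard bit mutation with rate `χ/n` produces a string `z` on the plateau with `z ≠ w` with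
probability at least `(1/2)(1 - χ/n)^n (1 + χ/2)`. -/
theorem crossover_two_non_w_produces_non_w
    (n k : ℕ) (hn : 1 ≤ n) (hk1 : 1 ≤ k) (hk2 : k + 1 ≤ n)
    (χ : ℝ) (hχ0 : 0 < χ) (hχn : χ < n)
    (x₁ x₂ w : BitString n) (hx₁ : oneCount x₁ = n - k) (hx₂ : oneCount x₂ = n - k)
    (hw : oneCount w = n - k) (hdist : hamming x₁ x₂ = 2)
    (hw1 : w ≠ x₁) (hw2 : w ≠ x₂) :
    ENNReal.ofReal (1 / 2 * (1 - χ / n) ^ n * (1 + χ / 2)) ≤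
      prEvent (crossMut (toProb (χ / n)) (toProb_le_one (χ / n)) x₁ x₂)
        (fun z => oneCount z = n - k ∧ z ≠ w) := by
  have hD2 : (Finset.univ.filter fun m => x₁ m ≠ x₂ m).card = 2 := hdist
  obtain ⟨i, j, hij, hD⟩ := Finset.card_eq_two.mp hD2
  have hmemi : x₁ i ≠ x₂ i := by
    have : i ∈ Finset.univ.filter fun m => x₁ m ≠ x₂ m := by rw [hD]; simp
    simpa using this
  have hmemj : x₁ j ≠ x₂ j := by
    have : j ∈ Finset.univ.filter fun m => x₁ m ≠ x₂ m := by rw [hD]; simp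
    simpa using this
  have hoff : ∀ m, m ≠ i → m ≠ j → x₁ m = x₂ m := by
    intro m hmi hmj
    by_contra hne
    have hmem : m ∈ Finset.univ.filter fun m => x₁ m ≠ x₂ m := by simp [hne]
    rw [hD] at hmem
    simp only [Finset.mem_insert, Finset.mem_singleton] at hmem
    rcases hmem with h | h
    · exact hmi h
    · exact hmj h
  have bne : ∀ (a b : Bool), a ≠ b → b = !a := by decide
  cases hb1 : x₁ i <;> cases hb2 : x₁ j
  · -- both false: contradiction
    have h2i : x₂ i = true := by rw [bne _ _ hmemi, hb1]; rfl
    have h2j : x₂ j = true := by rw [bne _ _ hmemj, hb2]; rfl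
    have := oneCount_add_two x₂ x₁ i j hij h2i h2j hb1 hb2
      (fun m hmi hmj => (hoff m hmi hmj).symm)
    omega
  · -- x₁ i = false, x₁ j = true
    have h2i : x₂ i = true := by rw [bne _ _ hmemi, hb1]; rfl
    have h2j : x₂ j = false := by rw [bne _ _ hmemj, hb2]; rfl
    exact main_bound n k hn hk1 hk2 χ hχ0 hχn x₁ x₂ w hx₁ hx₂ hdist hw1 hw2 j i hij.symm
      hb2 hb1 h2j h2i (fun m hmj hmi => hoff m hmi hmj)
  · -- x₁ i = true, x₁ j = false
    have h2i : x₂ i = false := by rw [bne _ _ hmemi, hb1]; rfl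
    have h2j : x₂ j = true := by rw [bne _ _ hmemj, hb2]; rfl
    exact main_bound n k hn hk1 hk2 χ hχ0 hχn x₁ x₂ w hx₁ hx₂ hdist hw1 hw2 i j hij
      hb1 hb2 h2i h2j hoff
  · -- both true: contradiction
    have h2i : x₂ i = false := by rw [bne _ _ hmemi, hb1]; rfl
    have h2j : x₂ j = false := by rw [bne _ _ hmemj, hb2]; rfl
    have := oneCount_add_two x₁ x₂ i j hij hb1 hb2 h2i h2j hoff
    omega

end GA
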